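/- Let δ_{i,j} (for 1 ≤ i ≤ j ≤ m) be nonnegative integers with δ_{i,j} ≤ j - i + 1, and let T = {c_{k₁},...,c_{k_r}} be the output of the greedy algorithm that scans c₁,...,c_m and adds c_k whenever some window [i,j] containing k satisfies δ_{i,j} ≥ |T ∩ C_{i,j}| + (j - k + 1). Then for every t ∈ [r] there exists a set T* ⊆ C of minimum size among sets satisfying |T* ∩ C_{i,j}| ≥ δ_{i,j} for all i ≤ j, such that {c_{k₁},...,c_{k_t}} ⊆ T*. In particular, the greedy output T has minimum size. -/

import Mathlib

open Classical

noncomputable def Cij {m : ℕ} (c : Fin m → ℝ) (i j : Fin m) : Finset ℝ :=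
  (Finset.univ.filter fun t => i ≤ t ∧ t ≤ j).image c

noncomputable def greedy {m : ℕ} (c : Fin m → ℝ) (δ : Fin m → Fin m → ℕ) : ℕ → Finset ℝ
  | 0 => ∅
  | (k+1) =>
    if h : k < m then
      if ∃ i j : Fin m, i ≤ ⟨k, h⟩ ∧ (⟨k, h⟩ : Fin m) ≤ j ∧
          (greedy c δ k ∩ Cij c i j).card + ((j : ℕ) - k + 1) ≤ δ i j
      then greedy c δ k ∪ {c ⟨k, h⟩} else greedy c δ k
    else greedy c δ k

/-- A set meets all the window demands `δ_{i,j}`. -/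
def MeetsDemands {m : ℕ} (c : Fin m → ℝ) (δ : Fin m → Fin m → ℕ) (S : Finset ℝ) : Prop :=
  ∀ i j : Fin m, i ≤ j → δ i j ≤ (S ∩ Cij c i j).card

variable {m : ℕ} (c : Fin m → ℝ) (δ : Fin m → Fin m → ℕ)

lemma greedy_succ (n : ℕ) : greedy c δ (n+1) =
    if h : n < m then
      if ∃ i j : Fin m, i ≤ ⟨n, h⟩ ∧ (⟨n, h⟩ : Fin m) ≤ j ∧
          (greedy c δ n ∩ Cij c i j).card + ((j : ℕ) - n + 1) ≤ δ i j
      then greedy c δ n ∪ {c ⟨n, h⟩} else greedy c δ n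
    else greedy c δ n := rfl

lemma mem_greedy_index (n : ℕ) : ∀ x ∈ greedy c δ n, ∃ a : Fin m, a.val < n ∧ c a = x := by
  induction n with
  | zero => intro x hx; simp [greedy] at hx
  | succ n ih =>
    intro x hx
    rw [greedy_succ] at hx
    split_ifs at hx with h1 h2
    · rcases Finset.mem_union.1 hx with hx | hx
      · obtain ⟨a, ha, rfl⟩ := ih x hx; exact ⟨a, by omega, rfl⟩
      · refine ⟨⟨n, h1⟩, Nat.lt_succ_self n, ?_⟩
        have : x = c ⟨n, h1⟩ := Finset.mem_singleton.1 hx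
        exact this.symm
    · obtain ⟨a, ha, rfl⟩ := ih x hx; exact ⟨a, by omega, rfl⟩
    · obtain ⟨a, ha, rfl⟩ := ih x hx; exact ⟨a, by omega, rfl⟩

lemma not_mem_greedy (hc : StrictMono c) {n : ℕ} {a : Fin m} (h : n ≤ a.val) :
    c a ∉ greedy c δ n := by
  intro hmem
  obtain ⟨b, hb, hba⟩ := mem_greedy_index c δ n (c a) hmem
  have := hc.injective hba
  subst this
  omega

lemma greedy_subset_succ (n : ℕ) : greedy c δ n ⊆ greedy c δ (n+1) := by
  rw [greedy_succ]
  split_ifs with h1 h2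
  · exact Finset.subset_union_left
  · exact Finset.Subset.refl _
  · exact Finset.Subset.refl _

lemma greedy_mono : Monotone (greedy c δ) := by
  apply monotone_nat_of_le_succ
  exact greedy_subset_succ c δ

lemma greedy_subset_image (n : ℕ) : greedy c δ n ⊆ Finset.univ.image c := by
  intro x hx
  obtain ⟨a, _, rfl⟩ := mem_greedy_index c δ n x hx
  exact Finset.mem_image_of_mem c (Finset.mem_univ a)

lemma mem_Cij {i j : Fin m} {x : ℝ} :
    x ∈ Cij c i j ↔ ∃ a : Fin m, i ≤ a ∧ a ≤ j ∧ c a = x := by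
  simp [Cij]; tauto

/-- The key greedy invariant. -/
lemma greedy_invariant (hc : StrictMono c)
    (hδ : ∀ i j : Fin m, i ≤ j → δ i j ≤ (j : ℕ) - (i : ℕ) + 1)
    (p q : Fin m) (hpq : p ≤ q) (n : ℕ) :
    δ p q ≤ (greedy c δ n ∩ Cij c p q).card + (q.val + 1 - n) := by
  induction n with
  | zero =>
    have := hδ p q hpq
    have : (p : ℕ) ≤ q := hpq
    omega
  | succ n ih =>
    by_cases hq : q.val < n
    · -- both correction terms zero; use monotonicity
      have h1 : q.val + 1 - n = 0 := by omega
      have h2 : q.val + 1 - (n+1) = 0 := by omega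
      rw [h1] at ih
      rw [h2]
      have hmono : (greedy c δ n ∩ Cij c p q).card ≤ (greedy c δ (n+1) ∩ Cij c p q).card :=
        Finset.card_le_card (Finset.inter_subset_inter (greedy_subset_succ c δ n) (Finset.Subset.refl _))
      omega
    · push_neg at hq
      by_cases hn : n < p.val
      · -- window entirely in the future
        have := hδ p q hpq
        have hklt : (p:ℕ) ≤ q := hpq
        have : δ p q ≤ q.val + 1 - (n+1) := by omega
        omega
      · push_neg at hn
        -- p ≤ n ≤ q, in particular n < m
        have hnm : n < m := lt_of_le_of_lt hq q.isLt
        rw [greedy_succ]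
        rw [dif_pos hnm]
        set k : Fin m := ⟨n, hnm⟩ with hk
        have hpk : p ≤ k := by simpa [hk, Fin.le_def] using hn
        have hkq : k ≤ q := by simpa [hk, Fin.le_def] using hq
        by_cases hcond : ∃ i j : Fin m, i ≤ k ∧ k ≤ j ∧
            (greedy c δ n ∩ Cij c i j).card + ((j : ℕ) - n + 1) ≤ δ i j
        · rw [if_pos hcond]
          have hck : c k ∈ Cij c p q := (mem_Cij c).2 ⟨k, hpk, hkq, rfl⟩
          have hnotmem : c k ∉ greedy c δ n ∩ Cij c p q := by
            intro hmem
            exact not_mem_greedy c δ hc (le_refl n) (Finset.mem_inter.1 hmem).1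
          have : (greedy c δ n ∪ {c k}) ∩ Cij c p q
              = insert (c k) (greedy c δ n ∩ Cij c p q) := by
            rw [Finset.union_comm, Finset.union_inter_distrib_right]
            rw [Finset.singleton_inter_of_mem hck]
            rw [Finset.insert_eq]
          rw [this, Finset.card_insert_of_notMem hnotmem]
          omega
        · rw [if_neg hcond]
          push_neg at hcond
          have := hcond p q hpk hkq
          omega

lemma greedy_meets (hc : StrictMono c)
    (hδ : ∀ i j : Fin m, i ≤ j → δ i j ≤ (j : ℕ) - (i : ℕ) + 1) :
    MeetsDemands c δ (greedy c δ m) := by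
  intro p q hpq
  have := greedy_invariant c δ hc hδ p q hpq m
  have : q.val + 1 - m = 0 := by omega
  have h := greedy_invariant c δ hc hδ p q hpq m
  omega

lemma card_Cij (hc : StrictMono c) (i j : Fin m) (hij : i ≤ j) :
    (Cij c i j).card = j.val + 1 - i.val := by
  rw [Cij, Finset.card_image_of_injective _ hc.injective]
  have : (Finset.univ.filter fun t : Fin m => i ≤ t ∧ t ≤ j) = Finset.Icc i j := by
    ext t; simp [Finset.mem_Icc]
  rw [this, Fin.card_Icc]

lemma image_meets (hc : StrictMono c)
    (hδ : ∀ i j : Fin m, i ≤ j → δ i j ≤ (j : ℕ) - (i : ℕ) + 1) :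
    MeetsDemands c δ (Finset.univ.image c) := by
  intro i j hij
  have hsub : Cij c i j ⊆ Finset.univ.image c := by
    intro x hx
    obtain ⟨a, _, _, rfl⟩ := (mem_Cij c).1 hx
    exact Finset.mem_image_of_mem c (Finset.mem_univ a)
  rw [Finset.inter_eq_right.2 hsub, card_Cij c hc i j hij]
  have := hδ i j hij
  have : (i:ℕ) ≤ j := hij
  omega

theorem greedy_prefix_extends_to_optimal' {m : ℕ} (c : Fin m → ℝ) (hc : StrictMono c)
    (δ : Fin m → Fin m → ℕ)
    (hδ : ∀ i j : Fin m, i ≤ j → δ i j ≤ (j : ℕ) - (i : ℕ) + 1) :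
    ∀ n : ℕ, ∃ Tstar ⊆ Finset.univ.image c,
        MeetsDemands c δ Tstar ∧
        (∀ S ⊆ Finset.univ.image c, MeetsDemands c δ S → Tstar.card ≤ S.card) ∧
        greedy c δ n ⊆ Tstar := by
  intro n
  induction n with
  | zero =>
    -- existence of a minimum-size demand-meeting set
    have hne : ((Finset.univ.image c).powerset.filter (MeetsDemands c δ)).Nonempty :=
      ⟨Finset.univ.image c, by
        simp only [Finset.mem_filter, Finset.mem_powerset]
        exact ⟨Finset.Subset.refl _, image_meets c δ hc hδ⟩⟩
    obtain ⟨T, hT, hTmin⟩ := Finset.exists_min_image _ Finset.card hne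
    simp only [Finset.mem_filter, Finset.mem_powerset] at hT
    refine ⟨T, hT.1, hT.2, ?_, ?_⟩
    · intro S hS hSm
      exact hTmin S (by simp only [Finset.mem_filter, Finset.mem_powerset]; exact ⟨hS, hSm⟩)
    · intro x hx; simp [greedy] at hx
  | succ n ihn =>
    obtain ⟨Tstar, hTsub, hTmeets, hTmin, hTgr⟩ := ihn
    rw [greedy_succ]
    by_cases hnm : n < m
    · rw [dif_pos hnm]
      set k : Fin m := ⟨n, hnm⟩ with hkdef
      by_cases hcond : ∃ i j : Fin m, i ≤ k ∧ k ≤ j ∧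
          (greedy c δ n ∩ Cij c i j).card + ((j : ℕ) - n + 1) ≤ δ i j
      · rw [if_pos hcond]
        by_cases hck : c k ∈ Tstar
        · exact ⟨Tstar, hTsub, hTmeets, hTmin, by
            intro y hy
            rcases Finset.mem_union.1 hy with hy | hy
            · exact hTgr hy
            · rw [Finset.mem_singleton.1 hy]; exact hck⟩
        · -- exchange argument
          obtain ⟨i, j, hik, hkj, hgr⟩ := hcond
          have hij : i ≤ j := le_trans hik hkj
          set Low : Finset ℝ :=
            (Finset.univ.filter fun t : Fin m => i ≤ t ∧ t ≤ j ∧ t < k).image c with hLow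
          set Hi : Finset ℝ :=
            (Finset.univ.filter fun t : Fin m => i ≤ t ∧ t ≤ j ∧ k ≤ t).image c with hHi
          have hmemLow : ∀ x : ℝ, x ∈ Low ↔ ∃ a : Fin m, i ≤ a ∧ a ≤ j ∧ a < k ∧ c a = x := by
            intro x
            simp only [hLow, Finset.mem_image, Finset.mem_filter, Finset.mem_univ, true_and]
            constructor
            · rintro ⟨a, ⟨h1, h2, h3⟩, h4⟩; exact ⟨a, h1, h2, h3, h4⟩
            · rintro ⟨a, h1, h2, h3, h4⟩; exact ⟨a, ⟨h1, h2, h3⟩, h4⟩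
          have hmemHi : ∀ x : ℝ, x ∈ Hi ↔ ∃ a : Fin m, i ≤ a ∧ a ≤ j ∧ k ≤ a ∧ c a = x := by
            intro x
            simp only [hHi, Finset.mem_image, Finset.mem_filter, Finset.mem_univ, true_and]
            constructor
            · rintro ⟨a, ⟨h1, h2, h3⟩, h4⟩; exact ⟨a, h1, h2, h3, h4⟩
            · rintro ⟨a, h1, h2, h3, h4⟩; exact ⟨a, ⟨h1, h2, h3⟩, h4⟩
          have hunion : Cij c i j = Low ∪ Hi := by
            ext x
            rw [Finset.mem_union, mem_Cij c, hmemLow, hmemHi]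
            constructor
            · rintro ⟨a, ha1, ha2, rfl⟩
              rcases lt_or_ge a k with h | h
              · exact Or.inl ⟨a, ha1, ha2, h, rfl⟩
              · exact Or.inr ⟨a, ha1, ha2, h, rfl⟩
            · rintro (⟨a, ha1, ha2, _, rfl⟩ | ⟨a, ha1, ha2, _, rfl⟩) <;> exact ⟨a, ha1, ha2, rfl⟩
          have hdisj : Disjoint Low Hi := by
            rw [Finset.disjoint_left]
            intro x hx hx'
            obtain ⟨a, _, _, ha, hax⟩ := (hmemLow x).1 hx
            obtain ⟨b, _, _, hb, hbx⟩ := (hmemHi x).1 hx'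
            have : a = b := hc.injective (hax.trans hbx.symm)
            subst this
            exact absurd (lt_of_le_of_lt hb ha) (lt_irrefl _)
          have hsplit : ∀ S : Finset ℝ,
              (S ∩ Cij c i j).card = (S ∩ Low).card + (S ∩ Hi).card := by
            intro S
            rw [hunion, Finset.inter_union_distrib_left]
            exact Finset.card_union_of_disjoint
              (hdisj.mono Finset.inter_subset_right Finset.inter_subset_right)
          -- Tstar ∩ Hi is small since c k ∉ Tstar
          have hHiTstar : (Tstar ∩ Hi).card ≤ j.val - n := by
            have hsub : Tstar ∩ Hi ⊆
                (Finset.univ.filter fun t : Fin m => k < t ∧ t ≤ j).image c := by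
              intro x hx
              obtain ⟨hx1, hx2⟩ := Finset.mem_inter.1 hx
              obtain ⟨a, _, ha2, ha3, rfl⟩ := (hmemHi x).1 hx2
              have hak : a ≠ k := by rintro rfl; exact hck hx1
              refine Finset.mem_image.2 ⟨a, Finset.mem_filter.2 ⟨Finset.mem_univ _,
                lt_of_le_of_ne ha3 (Ne.symm hak), ha2⟩, rfl⟩
            calc (Tstar ∩ Hi).card
                ≤ ((Finset.univ.filter fun t : Fin m => k < t ∧ t ≤ j).image c).card :=
                  Finset.card_le_card hsub
              _ = (Finset.univ.filter fun t : Fin m => k < t ∧ t ≤ j).card :=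
                  Finset.card_image_of_injective _ hc.injective
              _ = (Finset.Ioc k j).card := by
                  congr 1; ext t; simp [Finset.mem_Ioc]
              _ = j.val - n := by rw [Fin.card_Ioc]
          -- greedy n ∩ Hi = ∅
          have hgrHi : greedy c δ n ∩ Hi = ∅ := by
            rw [Finset.eq_empty_iff_forall_notMem]
            intro x hx
            obtain ⟨hx1, hx2⟩ := Finset.mem_inter.1 hx
            obtain ⟨a, _, _, ha3, rfl⟩ := (hmemHi x).1 hx2
            exact not_mem_greedy c δ hc (by exact_mod_cast ha3) hx1
          have hgrLow : (greedy c δ n ∩ Cij c i j).card = (greedy c δ n ∩ Low).card := by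
            rw [hsplit, hgrHi]; simp
          -- the counting chain
          have hchain : (greedy c δ n ∩ Low).card < (Tstar ∩ Low).card := by
            have h1 := hTmeets i j hij
            rw [hsplit Tstar] at h1
            rw [hgrLow] at hgr
            omega
          have hsubLow : greedy c δ n ∩ Low ⊆ Tstar ∩ Low :=
            Finset.inter_subset_inter hTgr (Finset.Subset.refl _)
          have hex : ∃ x ∈ Tstar ∩ Low, x ∉ greedy c δ n ∩ Low := by
            by_contra hcon
            push_neg at hcon
            exact absurd (Finset.card_le_card hcon) (not_le.2 hchain)
          obtain ⟨x, hxT, hxn⟩ := hex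
          obtain ⟨hxTs, hxLow⟩ := Finset.mem_inter.1 hxT
          have hxgr : x ∉ greedy c δ n := fun h => hxn (Finset.mem_inter.2 ⟨h, hxLow⟩)
          obtain ⟨a, _, _, hak, rfl⟩ := (hmemLow x).1 hxLow
          have hxne : c a ≠ c k := fun h => absurd (hc.injective h) (ne_of_lt hak)
          -- the exchanged set
          set Tstar' : Finset ℝ := insert (c k) (Tstar.erase (c a)) with hT'
          have hckerase : c k ∉ Tstar.erase (c a) := fun h => hck (Finset.mem_of_mem_erase h)
          have hcard' : Tstar'.card = Tstar.card := by
            rw [hT', Finset.card_insert_of_notMem hckerase,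
              Finset.card_erase_of_mem hxTs]
            have : 0 < Tstar.card := Finset.card_pos.2 ⟨c a, hxTs⟩
            omega
          have hmeets' : MeetsDemands c δ Tstar' := by
            intro p q hpq
            rcases lt_or_ge q.val n with hqn | hqn
            · -- window in the past: greedy n already meets it, and greedy n ⊆ Tstar'
              have hinv := greedy_invariant c δ hc hδ p q hpq n
              have hz : q.val + 1 - n = 0 := by omega
              rw [hz] at hinv
              have hsub2 : greedy c δ n ∩ Cij c p q ⊆ Tstar' ∩ Cij c p q := by
                apply Finset.inter_subset_inter _ (Finset.Subset.refl _)
                intro y hy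
                exact Finset.mem_insert_of_mem (Finset.mem_erase.2
                  ⟨fun h => hxgr (h ▸ hy), hTgr hy⟩)
              calc δ p q ≤ (greedy c δ n ∩ Cij c p q).card + 0 := hinv
                _ ≤ (Tstar' ∩ Cij c p q).card := by
                    simpa using Finset.card_le_card hsub2
            · rcases lt_or_ge n p.val with hnp | hnp
              · -- c a not in this window
                have hxnotC : c a ∉ Cij c p q := by
                  intro hmem
                  obtain ⟨b, hb1, _, hba⟩ := (mem_Cij c).1 hmem
                  have := hc.injective hba
                  subst this
                  have : (p:ℕ) ≤ b := hb1
                  have : (b:ℕ) < n := hak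
                  omega
                have hsub2 : Tstar ∩ Cij c p q ⊆ Tstar' ∩ Cij c p q := by
                  intro y hy
                  obtain ⟨hy1, hy2⟩ := Finset.mem_inter.1 hy
                  refine Finset.mem_inter.2 ⟨?_, hy2⟩
                  exact Finset.mem_insert_of_mem (Finset.mem_erase.2
                    ⟨fun h => hxnotC (h ▸ hy2), hy1⟩)
                exact le_trans (hTmeets p q hpq) (Finset.card_le_card hsub2)
              · -- c k in this window: swap preserves the count
                have hckC : c k ∈ Cij c p q :=
                  (mem_Cij c).2 ⟨k, Fin.le_def.2 hnp,
                    Fin.le_def.2 hqn, rfl⟩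
                have heq : Tstar' ∩ Cij c p q
                    = insert (c k) (Tstar.erase (c a) ∩ Cij c p q) := by
                  rw [hT', Finset.insert_inter_of_mem hckC]
                have hckE : c k ∉ Tstar.erase (c a) ∩ Cij c p q :=
                  fun h => hckerase (Finset.mem_inter.1 h).1
                have hle : (Tstar ∩ Cij c p q).card
                    ≤ (Tstar.erase (c a) ∩ Cij c p q).card + 1 := by
                  have hsub3 : Tstar ∩ Cij c p q
                      ⊆ insert (c a) (Tstar.erase (c a) ∩ Cij c p q) := by
                    intro y hy
                    obtain ⟨hy1, hy2⟩ := Finset.mem_inter.1 hy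
                    by_cases hy3 : y = c a
                    · exact hy3 ▸ Finset.mem_insert_self _ _
                    · exact Finset.mem_insert_of_mem
                        (Finset.mem_inter.2 ⟨Finset.mem_erase.2 ⟨hy3, hy1⟩, hy2⟩)
                  calc (Tstar ∩ Cij c p q).card
                      ≤ (insert (c a) (Tstar.erase (c a) ∩ Cij c p q)).card :=
                        Finset.card_le_card hsub3
                    _ ≤ (Tstar.erase (c a) ∩ Cij c p q).card + 1 :=
                        Finset.card_insert_le _ _
                rw [heq, Finset.card_insert_of_notMem hckE]
                exact le_trans (hTmeets p q hpq) hle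
          refine ⟨Tstar', ?_, hmeets', ?_, ?_⟩
          · intro y hy
            rcases Finset.mem_insert.1 hy with rfl | hy
            · exact Finset.mem_image_of_mem c (Finset.mem_univ k)
            · exact hTsub (Finset.mem_of_mem_erase hy)
          · intro S hS hSm
            rw [hcard']
            exact hTmin S hS hSm
          · intro y hy
            rcases Finset.mem_union.1 hy with hy | hy
            · exact Finset.mem_insert_of_mem (Finset.mem_erase.2
                ⟨fun h => hxgr (h ▸ hy), hTgr hy⟩)
            · rw [Finset.mem_singleton.1 hy]
              exact Finset.mem_insert_self _ _
      · rw [if_neg hcond]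
        exact ⟨Tstar, hTsub, hTmeets, hTmin, hTgr⟩
    · rw [dif_neg hnm]
      exact ⟨Tstar, hTsub, hTmeets, hTmin, hTgr⟩

/-- For every `t`, some minimum-size demand-meeting set `Tstar` contains the first `t`
greedily chosen points (in increasing order); in particular the greedy output has
minimum size among demand-meeting subsets of `C`. -/
theorem greedy_prefix_extends_to_optimal {m : ℕ} (c : Fin m → ℝ) (hc : StrictMono c)
    (δ : Fin m → Fin m → ℕ)
    (hδ : ∀ i j : Fin m, i ≤ j → δ i j ≤ (j : ℕ) - (i : ℕ) + 1) :
    (∀ t : ℕ, t ≤ (greedy c δ m).card →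
      ∃ Tstar ⊆ Finset.univ.image c,
        MeetsDemands c δ Tstar ∧
        (∀ S ⊆ Finset.univ.image c, MeetsDemands c δ S → Tstar.card ≤ S.card) ∧
        (∀ x ∈ ((greedy c δ m).sort (· ≤ ·)).take t, x ∈ Tstar)) ∧
    (∀ S ⊆ Finset.univ.image c, MeetsDemands c δ S → (greedy c δ m).card ≤ S.card) := by
  obtain ⟨Tstar, hsub, hmeets, hmin, hgr⟩ := greedy_prefix_extends_to_optimal' c hc δ hδ m
  constructor
  · intro t _
    refine ⟨Tstar, hsub, hmeets, hmin, ?_⟩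
    intro x hx
    have hx' : x ∈ (greedy c δ m).sort (· ≤ ·) := List.mem_of_mem_take hx
    exact hgr ((Finset.mem_sort _).1 hx')
  · intro S hS hSm
    exact le_trans (Finset.card_le_card hgr) (hmin S hS hSm)
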